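/- Specializing the two-variable identity at x=1: ∑_{n₁,n₂ ≥ 0} q^{(3n₁²-n₁)/2 + 4n₁n₂ + 4n₂²} / ((q;q)_{n₁}(q²;q²)_{n₂}) = ∑_{n≥0} q^{n²}/(q;q)_n, as formal power series in q. -/

import Mathlib

open Finset

/-- `(q;q)_n = ∏_{i=1}^n (1 - q^i)`. -/
noncomputable def qFac (q : ℂ) (n : ℕ) : ℂ :=
  ∏ i ∈ Finset.range n, (1 - q ^ (i + 1))


lemma natPar (m : ℕ) : (m^2 - m) % 2 = 0 := by
  rcases Nat.even_or_odd m with ⟨c, hc⟩ | ⟨c, hc⟩ <;> subst hc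
  · have h : (c+c)^2 = 2*(2*(c*c)) := by ring
    rw [h]; generalize c*c = k; omega
  · have h : (2*c+1)^2 = 2*(2*(c*c)+2*c)+1 := by ring
    rw [h]; generalize c*c = k; omega

lemma natSq (m : ℕ) : m ≤ m^2 := Nat.le_self_pow two_ne_zero m

lemma nat1 (m : ℕ) : ((m+1)^2 - (m+1))/2 = (m^2-m)/2 + m := by
  have hkm := natSq m
  have hpar := natPar m
  have h1 : (m+1)^2 = m^2 + (2*m+1) := by ring
  rw [h1]
  generalize m^2 = k at hkm hpar ⊢
  omega

lemma nat2 (m j : ℕ) : (3*m^2 - m)/2 + 4*m*j + 4*j^2 = (m+2*j)^2 + (m^2 - m)/2 := by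
  have hkm := natSq m
  have hpar := natPar m
  have hp : (m+2*j)^2 = m^2 + (4*m*j + 4*j^2) := by ring
  have h4 : (3*m^2 - m)/2 + 4*m*j + 4*j^2 = (3*m^2-m)/2 + (4*m*j + 4*j^2) := by ring
  rw [hp, h4]
  have key : (3*m^2 - m)/2 = m^2 + (m^2-m)/2 := by
    generalize m^2 = k at hkm hpar ⊢
    omega
  rw [key]; ring

lemma natGap1 (m : ℕ) : (3*m^2-m)/2 + m + 1 ≤ (3*(m+1)^2 - (m+1))/2 := by
  have hkm := natSq m
  have hpar := natPar m
  have h1 : (m+1)^2 = m^2 + (2*m+1) := by ring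
  rw [h1]
  generalize m^2 = k at hkm hpar ⊢
  omega

lemma natGap2 (j : ℕ) : 4*j^2 + j + 1 ≤ 4*(j+1)^2 := by
  have h1 : (j+1)^2 = j^2 + (2*j+1) := by ring
  rw [h1]
  generalize j^2 = k
  omega

open Finset


lemma qFac_succ (q : ℂ) (n : ℕ) : qFac q (n+1) = qFac q n * (1 - q^(n+1)) := by
  rw [qFac, qFac, Finset.prod_range_succ]

lemma one_sub_qpow_ne {q : ℂ} (hq : ‖q‖ < 1) (i : ℕ) : 1 - q^(i+1) ≠ 0 := by
  intro h
  have h1 : q^(i+1) = 1 := by linear_combination -h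
  have h2 : ‖q^(i+1)‖ < 1 := by
    rw [norm_pow]
    calc ‖q‖^(i+1) ≤ ‖q‖^1 := pow_le_pow_of_le_one (norm_nonneg q) hq.le (by omega)
    _ < 1 := by simpa using hq
  rw [h1] at h2; simp at h2

lemma qFac_ne_zero {q : ℂ} (hq : ‖q‖ < 1) (n : ℕ) : qFac q n ≠ 0 :=
  Finset.prod_ne_zero_iff.mpr fun i _ => one_sub_qpow_ne hq i

lemma norm_sq_lt {q : ℂ} (hq : ‖q‖ < 1) : ‖q^2‖ < 1 := by
  rw [norm_pow]
  calc ‖q‖^2 ≤ ‖q‖^1 := pow_le_pow_of_le_one (norm_nonneg q) hq.le (by omega)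
  _ < 1 := by simpa using hq

lemma qFac_norm_ge {q : ℂ} (hq : ‖q‖ < 1) (n : ℕ) : (1-‖q‖)^n ≤ ‖qFac q n‖ := by
  have hc : (1-‖q‖)^n = ∏ _i ∈ Finset.range n, (1-‖q‖) := by
    rw [Finset.prod_const, Finset.card_range]
  rw [qFac, norm_prod, hc]
  refine Finset.prod_le_prod (fun i _ => by nlinarith [norm_nonneg q]) fun i _ => ?_
  calc 1 - ‖q‖ ≤ 1 - ‖q^(i+1)‖ := by
        rw [norm_pow]
        have : ‖q‖^(i+1) ≤ ‖q‖^1 := pow_le_pow_of_le_one (norm_nonneg q) hq.le (by omega)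
        rw [pow_one] at this; linarith
  _ = ‖(1:ℂ)‖ - ‖q^(i+1)‖ := by simp
  _ ≤ ‖1 - q^(i+1)‖ := norm_sub_norm_le _ _

section Identity
variable {q : ℂ}

noncomputable def aQ (q : ℂ) (m : ℕ) : ℂ := q^((m^2-m)/2) / qFac q m
noncomputable def bQ (q : ℂ) (j : ℕ) : ℂ := 1 / qFac (q^2) j
noncomputable def GQ (q : ℂ) (n : ℕ) : ℂ :=
  ∑ j ∈ Finset.range (n/2+1), aQ q (n-2*j) * bQ q j
noncomputable def KQ (q : ℂ) (n : ℕ) : ℂ :=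
  ∑ j ∈ Finset.range (n/2+1), q^(n-2*j) * aQ q (n-2*j) * bQ q j

lemma aQ_zero : aQ q 0 = 1 := by simp [aQ, qFac]

lemma bQ_zero : bQ q 0 = 1 := by simp [bQ, qFac]

lemma aQ_succ (hq : ‖q‖ < 1) (m : ℕ) : aQ q (m+1) * (1 - q^(m+1)) = q^m * aQ q m := by
  have hne : (1 - q^(m+1)) ≠ 0 := one_sub_qpow_ne hq m
  have hf : qFac q m ≠ 0 := qFac_ne_zero hq m
  rw [aQ, aQ, qFac_succ, nat1, pow_add]
  field_simp

lemma bQ_succ (hq : ‖q‖ < 1) (j : ℕ) : bQ q (j+1) * (1 - q^(2*j+2)) = bQ q j := by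
  have hq2 := norm_sq_lt hq
  have hne : (1 - (q^2)^(j+1)) ≠ 0 := one_sub_qpow_ne hq2 j
  have hf : qFac (q^2) j ≠ 0 := qFac_ne_zero hq2 j
  have hp : (q^2)^(j+1) = q^(2*j+2) := by rw [← pow_mul]; ring_nf
  rw [hp] at hne
  rw [bQ, bQ, qFac_succ, hp]
  field_simp

lemma G_eq (hq : ‖q‖ < 1) (n : ℕ) (hn : 1 ≤ n) : GQ q n = KQ q n + KQ q (n-1) := by
  have key : ∀ j ∈ Finset.range (n/2+1), aQ q (n-2*j) * bQ q j
      = q^(n-2*j) * aQ q (n-2*j) * bQ q j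
        + (if j ∈ Finset.range ((n-1)/2+1) then q^((n-1)-2*j) * aQ q ((n-1)-2*j) * bQ q j else 0) := by
    intro j hj
    rw [Finset.mem_range] at hj
    rcases Nat.lt_or_ge (2*j) n with h2 | h2
    · set m := (n-1)-2*j with hmdef
      have hm : n - 2*j = m + 1 := by omega
      have hmem : j ∈ Finset.range ((n-1)/2+1) := by rw [Finset.mem_range]; omega
      rw [hm, if_pos hmem]
      have h := aQ_succ hq m
      linear_combination (bQ q j) * h
    · have h2j : 2*j = n := by omega
      have hm : n - 2*j = 0 := by omega
      have hmem : j ∉ Finset.range ((n-1)/2+1) := by rw [Finset.mem_range]; omega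
      rw [hm, if_neg hmem, aQ_zero]
      simp
  rw [GQ, Finset.sum_congr rfl key, Finset.sum_add_distrib]
  congr 1
  rw [Finset.sum_ite_mem, Finset.inter_eq_right.mpr (by
    intro x hx; rw [Finset.mem_range] at *; omega), KQ]

lemma G_mul (hq : ‖q‖ < 1) (n : ℕ) (hn : 2 ≤ n) :
    GQ q n * (1 - q^n) = KQ q (n-1) + KQ q (n-2) := by
  have key : ∀ j ∈ Finset.range (n/2+1), aQ q (n-2*j) * bQ q j * (1 - q^n)
      = (if j ∈ Finset.range ((n-1)/2+1) then q^((n-1)-2*j) * aQ q ((n-1)-2*j) * bQ q j else 0)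
        + (if 1 ≤ j then q^(n-2*j) * aQ q (n-2*j) * bQ q (j-1) else 0) := by
    intro j hj
    rw [Finset.mem_range] at hj
    rcases Nat.lt_or_ge j 1 with hj0' | hj1'
    · have hj0 : j = 0 := by omega
      subst hj0
      have hmem : (0:ℕ) ∈ Finset.range ((n-1)/2+1) := by rw [Finset.mem_range]; omega
      rw [if_pos hmem, if_neg (by omega)]
      have hm : n - 2*0 = (n-1) + 1 := by omega
      have hm2 : (n-1) - 2*0 = n - 1 := by omega
      rw [hm, hm2]
      have h := aQ_succ hq (n-1)
      have h4 : (n-1) + 1 = n := by omega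
      rw [h4] at h ⊢
      linear_combination (bQ q 0) * h
    · rcases Nat.lt_or_ge (2*j) n with h2 | h2
      · -- 1 ≤ j, 2j < n
        set m := (n-1)-2*j with hmdef
        have hm : n - 2*j = m + 1 := by omega
        have hmem : j ∈ Finset.range ((n-1)/2+1) := by rw [Finset.mem_range]; omega
        rw [hm, if_pos hmem, if_pos hj1']
        set i := j - 1 with hidef
        have hji : j = i + 1 := by omega
        have h1 := aQ_succ hq m
        have h2' := bQ_succ hq i
        have hiq : 2*i+2 = 2*j := by omega
        rw [hiq, ← hji] at h2'
        have h3 : q^n = q^(m+1) * q^(2*j) := by rw [← pow_add]; congr 1; omega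
        linear_combination (bQ q j) * h1 + q^(m+1) * aQ q (m+1) * h2'
          - aQ q (m+1) * bQ q j * h3
      · -- 2j = n
        have h2j : 2*j = n := by omega
        have hm : n - 2*j = 0 := by omega
        have hmem : j ∉ Finset.range ((n-1)/2+1) := by rw [Finset.mem_range]; omega
        rw [hm, if_neg hmem, if_pos hj1', aQ_zero]
        set i := j - 1 with hidef
        have hji : j = i + 1 := by omega
        have h2' := bQ_succ hq i
        have hiq : 2*i+2 = n := by omega
        rw [hiq, ← hji] at h2'
        linear_combination h2'
  rw [GQ, Finset.sum_mul]
  rw [Finset.sum_congr rfl key, Finset.sum_add_distrib]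
  congr 1
  · rw [Finset.sum_ite_mem, Finset.inter_eq_right.mpr (by
      intro x hx; rw [Finset.mem_range] at *; omega), KQ]
  · rw [Finset.sum_range_succ']
    simp only [if_neg (by omega : ¬ (1:ℕ) ≤ 0), add_zero]
    have hr : n/2 = (n-2)/2 + 1 := by omega
    rw [KQ, ← hr]
    refine Finset.sum_congr rfl fun i hi => ?_
    rw [if_pos (by omega)]
    have e1 : n - 2*(i+1) = (n-2) - 2*i := by omega
    have e2 : i + 1 - 1 = i := by omega
    rw [e1, e2]

lemma G_val (hq : ‖q‖ < 1) : ∀ n, GQ q n = 1 / qFac q n := by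
  intro n
  induction n using Nat.strong_induction_on with
  | _ n ih =>
    match n with
    | 0 => simp [GQ, aQ_zero, bQ_zero, qFac]
    | 1 =>
      rw [GQ]
      norm_num
      rw [aQ, bQ, qFac]
      norm_num [qFac_succ, qFac]
    | (n+2) =>
      have h4 := G_mul hq (n+2) (by omega)
      have h3 := G_eq hq (n+1) (by omega)
      have hs1 : n + 2 - 1 = n + 1 := rfl
      have hs2 : n + 2 - 2 = n := rfl
      have hs3 : n + 1 - 1 = n := rfl
      rw [hs1, hs2] at h4
      rw [hs3] at h3
      have hG1 : GQ q (n+1) = 1 / qFac q (n+1) := ih (n+1) (by omega)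
      have hne : (1 - q^(n+2)) ≠ 0 := one_sub_qpow_ne hq (n+1)
      have hf : qFac q (n+1) ≠ 0 := qFac_ne_zero hq (n+1)
      have : GQ q (n+2) * (1 - q^(n+2)) = 1 / qFac q (n+1) := by
        rw [h4, ← h3, hG1]
      rw [qFac_succ]
      field_simp at this ⊢
      linear_combination this

end Identity

section Summability

lemma summable_pow_div {t : ℝ} (ht0 : 0 ≤ t) (ht1 : t < 1) (e : ℕ → ℕ)
    (he : ∀ m, e m + m + 1 ≤ e (m+1)) :
    Summable (fun m : ℕ => t ^ (e m) / (1 - t) ^ m) := by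
  have h1t : (0:ℝ) < 1 - t := by linarith
  obtain ⟨M, hM⟩ := exists_pow_lt_of_lt_one (show (0:ℝ) < (1-t)/2 by linarith) ht1
  refine summable_of_ratio_norm_eventually_le (r := 1/2) (by norm_num) ?_
  filter_upwards [Filter.eventually_ge_atTop M] with m hm
  have hfnn : ∀ k : ℕ, 0 ≤ t^(e k) / (1-t)^k :=
    fun k => div_nonneg (pow_nonneg ht0 _) (pow_nonneg h1t.le _)
  rw [Real.norm_of_nonneg (hfnn _), Real.norm_of_nonneg (hfnn _)]
  have step1 : t^(e (m+1)) ≤ t^(e m) * ((1-t)/2) := by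
    calc t^(e (m+1)) ≤ t^(e m + m + 1) := pow_le_pow_of_le_one ht0 ht1.le (he m)
    _ = t^(e m) * t^(m+1) := by rw [← pow_add, add_assoc]
    _ ≤ t^(e m) * ((1-t)/2) := by
        refine mul_le_mul_of_nonneg_left ?_ (pow_nonneg ht0 _)
        calc t^(m+1) ≤ t^M := pow_le_pow_of_le_one ht0 ht1.le (by omega)
        _ ≤ (1-t)/2 := hM.le
  have hd : (0:ℝ) < (1-t)^m * (1-t) := by positivity
  calc t^(e (m+1)) / (1-t)^(m+1) = t^(e (m+1)) / ((1-t)^m * (1-t)) := by rw [pow_succ]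
  _ ≤ (t^(e m) * ((1-t)/2)) / ((1-t)^m * (1-t)) := by
      rw [div_eq_mul_inv, div_eq_mul_inv]
      exact mul_le_mul_of_nonneg_right step1 (by positivity)
  _ = 1/2 * (t^(e m) / (1-t)^m) := by field_simp

end Summability

noncomputable def fT (q : ℂ) (m j : ℕ) : ℂ :=
  q ^ ((3 * m ^ 2 - m) / 2 + 4 * m * j + 4 * j ^ 2) / (qFac q m * qFac (q ^ 2) j)

lemma fiber_sum {q : ℂ} (hq : ‖q‖ < 1) (n : ℕ) :
    ∑ j ∈ Finset.range (n/2+1), fT q (n-2*j) j = q^(n^2) / qFac q n := by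
  have key : ∀ j ∈ Finset.range (n/2+1), fT q (n-2*j) j
      = q^(n^2) * (aQ q (n-2*j) * bQ q j) := by
    intro j hj; rw [Finset.mem_range] at hj
    have h2j : n - 2*j + 2*j = n := by omega
    have hf1 : qFac q (n-2*j) ≠ 0 := qFac_ne_zero hq _
    have hf2 : qFac (q^2) j ≠ 0 := qFac_ne_zero (norm_sq_lt hq) _
    rw [fT, aQ, bQ, nat2 (n-2*j) j, h2j, pow_add]
    field_simp
  rw [Finset.sum_congr rfl key, ← Finset.mul_sum, ← GQ, G_val hq n, mul_one_div]

lemma fT_norm_le {q : ℂ} (hq : ‖q‖ < 1) (m j : ℕ) :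
    ‖fT q m j‖ ≤ (‖q‖^((3*m^2-m)/2) / (1-‖q‖)^m) * (‖q‖^(4*j^2) / (1-‖q‖)^j) := by
  set t := ‖q‖ with htd
  have ht0 : 0 ≤ t := norm_nonneg q
  have h1t : (0:ℝ) < 1 - t := by linarith
  rw [fT, norm_div, norm_mul, norm_pow]
  have hden : (1-t)^m * (1-t)^j ≤ ‖qFac q m‖ * ‖qFac (q^2) j‖ := by
    refine mul_le_mul (qFac_norm_ge hq m) ?_ (pow_nonneg h1t.le _) (norm_nonneg _)
    calc (1-t)^j ≤ (1-t^2)^j := pow_le_pow_left₀ h1t.le (by nlinarith) j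
    _ ≤ ‖qFac (q^2) j‖ := by
        have := qFac_norm_ge (norm_sq_lt hq) j
        rwa [norm_pow] at this
  have hnum : t ^ ((3*m^2-m)/2 + 4*m*j + 4*j^2) ≤ t^((3*m^2-m)/2) * t^(4*j^2) := by
    rw [← pow_add]
    exact pow_le_pow_of_le_one ht0 hq.le
      (Nat.add_le_add (Nat.le_add_right _ _) le_rfl)
  have key : t ^ ((3*m^2-m)/2 + 4*m*j + 4*j^2) / (‖qFac q m‖ * ‖qFac (q^2) j‖)
      ≤ (t^((3*m^2-m)/2) * t^(4*j^2)) / ((1-t)^m * (1-t)^j) :=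
    div_le_div₀ (by positivity) hnum (by positivity) hden
  refine key.trans (le_of_eq ?_)
  rw [div_mul_div_comm]

set_option maxHeartbeats 2000000 in
lemma fT_summable {q : ℂ} (hq : ‖q‖ < 1) :
    Summable (fun p : ℕ × ℕ => fT q p.1 p.2) := by
  have ht0 : 0 ≤ ‖q‖ := norm_nonneg q
  have h1t : (0:ℝ) < 1 - ‖q‖ := by linarith
  have hA : Summable (fun m : ℕ => ‖q‖^((3*m^2-m)/2) / (1-‖q‖)^m) :=
    summable_pow_div ht0 hq (fun m => (3*m^2-m)/2) natGap1
  have hB : Summable (fun j : ℕ => ‖q‖^(4*j^2) / (1-‖q‖)^j) :=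
    summable_pow_div ht0 hq (fun j => 4*j^2) natGap2
  have hA' : Summable (fun m : ℕ => ‖‖q‖^((3*m^2-m)/2) / (1-‖q‖)^m‖) := by
    refine (summable_congr (fun m => ?_)).mpr hA
    exact Real.norm_of_nonneg (div_nonneg (pow_nonneg ht0 _) (pow_nonneg h1t.le _))
  have hB' : Summable (fun j : ℕ => ‖‖q‖^(4*j^2) / (1-‖q‖)^j‖) := by
    refine (summable_congr (fun j => ?_)).mpr hB
    exact Real.norm_of_nonneg (div_nonneg (pow_nonneg ht0 _) (pow_nonneg h1t.le _))
  have hAB : Summable (fun p : ℕ × ℕ =>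
      (‖q‖^((3*p.1^2-p.1)/2) / (1-‖q‖)^p.1) * (‖q‖^(4*p.2^2) / (1-‖q‖)^p.2)) :=
    summable_mul_of_summable_norm hA' hB'
  exact Summable.of_norm_bounded hAB (fun p => fT_norm_le hq p.1 p.2)

theorem double_sum_RR_one (q : ℂ) (hq : ‖q‖ < 1) :
    ∑' n : ℕ × ℕ,
        q ^ ((3 * n.1 ^ 2 - n.1) / 2 + 4 * n.1 * n.2 + 4 * n.2 ^ 2) /
          (qFac q n.1 * qFac (q ^ 2) n.2) =
      ∑' n : ℕ, q ^ (n ^ 2) / qFac q n := by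
  classical
  have hsum := fT_summable hq
  set F : ℕ × ℕ → ℂ := fun p => if 2*p.2 ≤ p.1 then fT q (p.1 - 2*p.2) p.2 else 0 with hF
  set i : ℕ × ℕ → ℕ × ℕ := fun p => (p.1 + 2*p.2, p.2) with hi
  have hinj : Function.Injective i := by
    intro ⟨a,b⟩ ⟨c,d⟩ h
    simp only [hi, Prod.mk.injEq] at h ⊢
    omega
  have hFi : ∀ p : ℕ × ℕ, F (i p) = fT q p.1 p.2 := by
    intro p
    simp only [hF, hi]
    rw [if_pos (by omega : 2*p.2 ≤ p.1 + 2*p.2)]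
    congr 1
    omega
  have hrange : ∀ x ∉ Set.range i, F x = 0 := by
    intro x hx
    by_contra h
    apply hx
    have hle : 2*x.2 ≤ x.1 := by
      by_contra hc
      exact h (if_neg hc)
    refine ⟨(x.1 - 2*x.2, x.2), ?_⟩
    simp only [hi]
    have hx1 : x.1 - 2*x.2 + 2*x.2 = x.1 := by omega
    rw [hx1]
  have hFsum : Summable F := by
    rw [← Function.Injective.summable_iff hinj hrange]
    exact (summable_congr (fun p => hFi p)).mpr hsum
  calc ∑' p : ℕ × ℕ,
        q ^ ((3 * p.1 ^ 2 - p.1) / 2 + 4 * p.1 * p.2 + 4 * p.2 ^ 2) /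
          (qFac q p.1 * qFac (q ^ 2) p.2)
      = ∑' p : ℕ × ℕ, F (i p) := by
        refine tsum_congr fun p => ?_
        rw [hFi p]
        rfl
  _ = ∑' p : ℕ × ℕ, F p := by
        refine Function.Injective.tsum_eq hinj ?_
        intro x hx
        by_contra hc
        exact hx (hrange x hc)
  _ = ∑' n : ℕ, ∑' j : ℕ, F (n, j) := Summable.tsum_prod hFsum
  _ = ∑' n : ℕ, q ^ (n ^ 2) / qFac q n := by
        refine tsum_congr fun n => ?_
        have h1 : ∑' j : ℕ, F (n, j) = ∑ j ∈ Finset.range (n/2+1), F (n, j) :=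
          tsum_eq_sum (fun j hj => by
            rw [Finset.mem_range] at hj
            exact if_neg (by omega))
        have h2 : ∀ j ∈ Finset.range (n/2+1), F (n, j) = fT q (n-2*j) j := by
          intro j hj
          rw [Finset.mem_range] at hj
          exact if_pos (by omega)
        rw [h1, Finset.sum_congr rfl h2, fiber_sum hq n]
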